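/- Let $\mathcal{F}$ be a shellable family of $n$ subsets of $[n]$ with transversal $t$, let $S$ be the set of $k\in[n]$ contained in exactly one member of $\mathcal{F}$, and let $m$ satisfy $n-|S|+1\le m\le n$. Then for every configuration $f$ of $t$, there exists a surjective map $\sigma:[n]\to[m]$ such that for every member $F$, $\sigma(t(F))$ is the $f(t(F))$-th smallest element of $\sigma(F)$. -/

import Mathlib

open Finset Function


/-- An ordering `F 0, F 1, …` of a family is a shelling if every initial union
has cardinality equal to its length. -/
def IsShelling {n m : ℕ} (F : Fin m → Finset (Fin n)) : Prop :=
  ∀ k : Fin m, ((Finset.univ.filter fun i => i ≤ k).biUnion F).card = (k : ℕ) + 1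

/-- A family is shellable if some reordering of it is a shelling. -/
def Shellable {n m : ℕ} (F : Fin m → Finset (Fin n)) : Prop :=
  ∃ π : Equiv.Perm (Fin m), IsShelling (F ∘ π)

/-- `σ (t i)` is the `f (t i)`-th smallest element of the image `σ(F i)`,
for every index `i`. -/
def Satisfies {n m m' : ℕ} (F : Fin m → Finset (Fin n)) (t : Fin m → Fin n)
    (σ : Fin n → Fin m') (f : Fin n → ℕ) : Prop :=
  ∀ i, (((F i).image σ).filter fun y => y ≤ σ (t i)).card = f (t i)

namespace Stmt8


noncomputable def nthVal (W : Finset ℚ) (i : ℕ) : ℚ := (W.sort (· ≤ ·)).getD i 0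

lemma nthVal_eq {W : Finset ℚ} {i : ℕ} (h : i < W.card) :
    nthVal W i = W.orderEmbOfFin rfl ⟨i, h⟩ := by
  rw [Finset.orderEmbOfFin_apply]
  unfold nthVal
  rw [List.getD_eq_getElem _ _ (by rw [Finset.length_sort]; exact h)]
  rfl

lemma nthVal_mem {W : Finset ℚ} {i : ℕ} (h : i < W.card) : nthVal W i ∈ W := by
  rw [nthVal_eq h]; exact Finset.orderEmbOfFin_mem W rfl _

lemma nthVal_lt_nthVal {W : Finset ℚ} {i j : ℕ} (hij : i < j) (h : j < W.card) :
    nthVal W i < nthVal W j := by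
  rw [nthVal_eq (lt_trans hij h), nthVal_eq h]
  exact (W.orderEmbOfFin rfl).strictMono (by exact hij)

lemma card_filter_le_nthVal {W : Finset ℚ} {i : ℕ} (h : i < W.card) :
    (W.filter (fun x => x ≤ nthVal W i)).card = i + 1 := by
  classical
  set φ := W.orderEmbOfFin rfl with hφ
  rw [nthVal_eq h]
  have hcard : (Finset.Iic (⟨i, h⟩ : Fin W.card)).card = i + 1 := Fin.card_Iic _
  rw [← hcard]
  symm
  apply Finset.card_bij (fun j _ => (φ j : ℚ))
  · intro j hj
    rw [Finset.mem_filter]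
    exact ⟨Finset.orderEmbOfFin_mem W rfl j, φ.le_iff_le.mpr (Finset.mem_Iic.mp hj)⟩
  · intro a _ b _ hab
    exact φ.injective hab
  · intro x hx
    rw [Finset.mem_filter] at hx
    have : x ∈ Set.range φ := by rw [hφ, Finset.range_orderEmbOfFin]; exact hx.1
    obtain ⟨j, rfl⟩ := this
    exact ⟨j, Finset.mem_Iic.mpr (φ.le_iff_le.mp hx.2), rfl⟩

variable {n : ℕ}

noncomputable def stepVal (F : Fin n → Finset (Fin n)) (t tInv : Fin n → Fin n)
    (f : Fin n → ℕ) (A B : Finset (Fin n)) (K : Fin n) (prev : Fin n → ℚ) : ℚ :=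
  let W : Finset ℚ := ((F K).erase (t K)).image (fun y => prev (tInv y))
  if K ∈ B then 1
  else if K ∈ A then nthVal W (f (t K) - 1)
  else
    let lo : ℚ := if 2 ≤ f (t K) then nthVal W (f (t K) - 2) else 0
    let P : Finset ℚ := insert 1 (Finset.univ.image prev)
    (lo + (P.filter (fun x => lo < x)).min.untopD 1) / 2

noncomputable def gS (F : Fin n → Finset (Fin n)) (t tInv : Fin n → Fin n)
    (f : Fin n → ℕ) (A B : Finset (Fin n)) : ℕ → Fin n → ℚ
  | 0 => fun _ => 0
  | (k+1) => fun i =>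
      if hk : k < n then
        if i.val = k then stepVal F t tInv f A B ⟨k, hk⟩ (gS F t tInv f A B k)
        else gS F t tInv f A B k i
      else gS F t tInv f A B k i

variable {F : Fin n → Finset (Fin n)} {t tInv : Fin n → Fin n}
  {f : Fin n → ℕ} {A B : Finset (Fin n)}

lemma gS_succ (k : ℕ) (i : Fin n) : gS F t tInv f A B (k+1) i =
    if hk : k < n then
      (if i.val = k then stepVal F t tInv f A B ⟨k, hk⟩ (gS F t tInv f A B k)
       else gS F t tInv f A B k i)
    else gS F t tInv f A B k i := rfl

lemma gS_stable : ∀ (k' k : ℕ), k ≤ k' → ∀ j : Fin n, j.val < k →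
    gS F t tInv f A B k' j = gS F t tInv f A B k j := by
  intro k'
  induction k' with
  | zero => intro k hk j hj; omega
  | succ l ih =>
    intro k hk j hj
    rcases Nat.eq_or_lt_of_le hk with h | h
    · rw [h]
    · have hkl : k ≤ l := by omega
      have hjl : j.val ≠ l := by omega
      rw [gS_succ]
      by_cases hln : l < n
      · rw [dif_pos hln, if_neg hjl]
        exact ih k hkl j hj
      · rw [dif_neg hln]
        exact ih k hkl j hj

lemma gS_succ_self (k : ℕ) (hk : k < n) :
    gS F t tInv f A B (k+1) ⟨k, hk⟩ = stepVal F t tInv f A B ⟨k, hk⟩ (gS F t tInv f A B k) := by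
  rw [gS_succ, dif_pos hk, if_pos rfl]


noncomputable def gFin (F : Fin n → Finset (Fin n)) (t tInv : Fin n → Fin n)
    (f : Fin n → ℕ) (A B : Finset (Fin n)) : Fin n → ℚ :=
  fun y => gS F t tInv f A B n (tInv y)

theorem main_invariant
    (htt : ∀ j, tInv (t j) = j) (hty : ∀ y, t (tInv y) = y)
    (hmem : ∀ k, t k ∈ F k)
    (hidx : ∀ k : Fin n, ∀ y ∈ F k, (tInv y) ≤ k)
    (hf1 : ∀ k, 1 ≤ f (t k)) (hf2 : ∀ k, f (t k) ≤ (F k).card)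
    (hAonly : ∀ k ∈ A, ∀ j, t k ∈ F j → j = k)
    (hBonly : ∀ k ∈ B, ∀ j, t k ∈ F j → j = k)
    (hAf : ∀ k ∈ A, f (t k) < (F k).card)
    (hBf : ∀ k ∈ B, f (t k) = (F k).card)
    (hAB : ∀ k, k ∈ A → k ∈ B → False) :
    ∀ k : ℕ, ∀ j : Fin n, j.val < k →
      ((j ∉ A → j ∉ B → (0 < gFin F t tInv f A B (t j) ∧ gFin F t tInv f A B (t j) < 1) ∧
          ∀ j' : Fin n, j'.val < j.val → gFin F t tInv f A B (t j) ≠ gFin F t tInv f A B (t j'))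
      ∧ (j ∈ B → gFin F t tInv f A B (t j) = 1)
      ∧ (j ∈ A → ∃ j' : Fin n, j'.val < j.val ∧ j' ∉ A ∧ j' ∉ B ∧
            gFin F t tInv f A B (t j) = gFin F t tInv f A B (t j'))
      ∧ (((F j).image (gFin F t tInv f A B)).filter
            (fun y => y ≤ gFin F t tInv f A B (t j))).card = f (t j)) := by
  intro k
  induction k with
  | zero => intro j hj; omega
  | succ k ih =>
    intro j hj
    rcases Nat.lt_or_ge j.val k with h | h
    · exact ih j h
    have hjk : j.val = k := by omega
    have hk : k < n := hjk ▸ j.isLt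
    set g := gFin F t tInv f A B with hg
    set prev := gS F t tInv f A B k with hprev
    -- the value of g at t j is given by stepVal
    have hgtj : g (t j) = stepVal F t tInv f A B j prev := by
      rw [hg]; unfold gFin
      rw [htt j, gS_stable n (k+1) hk j (by omega)]
      have hj' : j = ⟨k, hk⟩ := Fin.ext hjk
      rw [hj', gS_succ_self k hk]
    -- g agrees with prev on indices < k
    have hgprev : ∀ j' : Fin n, j'.val < k → g (t j') = prev j' := by
      intro j' hj'
      rw [hg]; unfold gFin
      rw [htt j', hprev, gS_stable n k (le_of_lt hk) j' hj']
    set V := (F j).erase (t j) with hV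
    have hVidx : ∀ y ∈ V, (tInv y).val < k := by
      intro y hy
      rw [hV, Finset.mem_erase] at hy
      have h1 : tInv y ≤ j := hidx j y hy.2
      have h2 : tInv y ≠ j := by
        intro hcon
        apply hy.1
        rw [← hty y, hcon]
      have h3 : (tInv y) < j := lt_of_le_of_ne h1 h2
      have h4 : (tInv y).val < j.val := h3
      omega
    have hVfresh : ∀ y ∈ V, tInv y ∉ A ∧ tInv y ∉ B := by
      intro y hy
      have hyF : y ∈ F j := Finset.mem_of_mem_erase hy
      have hlt : (tInv y).val < k := hVidx y hy
      constructor
      · intro hcon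
        have := hAonly (tInv y) hcon j (by rw [hty y]; exact hyF)
        rw [← this] at hlt; omega
      · intro hcon
        have := hBonly (tInv y) hcon j (by rw [hty y]; exact hyF)
        rw [← this] at hlt; omega
    have hVg : ∀ y ∈ V, prev (tInv y) = g y := by
      intro y hy
      rw [hg]; unfold gFin
      rw [hprev, gS_stable n k (le_of_lt hk) (tInv y) (hVidx y hy)]
    set W := V.image (fun y => prev (tInv y)) with hWdef
    have hWg : W = V.image g := Finset.image_congr (fun y hy => hVg y hy)
    have hginjV : ∀ y ∈ V, ∀ y' ∈ V, g y = g y' → y = y' := by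
      intro y hy y' hy' heq
      by_contra hne
      have hii : tInv y ≠ tInv y' := fun hcon => hne (by rw [← hty y, hcon, hty y'])
      -- wlog tInv y' < tInv y
      rcases Nat.lt_or_ge (tInv y).val (tInv y').val with hlt | hge
      · have hfr := hVfresh y' hy'
        have := ((ih (tInv y') (hVidx y' hy')).1 hfr.1 hfr.2).2 (tInv y) hlt
        rw [hty y, hty y'] at this
        exact this heq.symm
      · have hlt : (tInv y').val < (tInv y).val := by
          rcases Nat.lt_or_ge (tInv y').val (tInv y).val with h' | h'
          · exact h'
          · exfalso; exact hii (Fin.ext (le_antisymm h' hge))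
        have hfr := hVfresh y hy
        have := ((ih (tInv y) (hVidx y hy)).1 hfr.1 hfr.2).2 (tInv y') hlt
        rw [hty y, hty y'] at this
        exact this heq
    have hWcard : W.card + 1 = (F j).card := by
      rw [hWg, Finset.card_image_of_injOn (fun y hy y' hy' => hginjV y hy y' hy'),
        hV, Finset.card_erase_of_mem (hmem j)]
      have : 0 < (F j).card := Finset.card_pos.mpr ⟨t j, hmem j⟩
      omega
    have hW01 : ∀ w ∈ W, 0 < w ∧ w < 1 := by
      intro w hw
      rw [hWg, Finset.mem_image] at hw
      obtain ⟨y, hy, rfl⟩ := hw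
      have hfr := hVfresh y hy
      have h1 := ((ih (tInv y) (hVidx y hy)).1 hfr.1 hfr.2).1
      rw [hty y] at h1
      exact h1
    have himgFj : (F j).image g = insert (g (t j)) W := by
      rw [hWg, ← Finset.image_insert, hV, Finset.insert_erase (hmem j)]
    have hfj1 : 1 ≤ f (t j) := hf1 j
    have hfj2 : f (t j) ≤ (F j).card := hf2 j
    by_cases hB : j ∈ B
    · -- case B : value 1
      have hcval : g (t j) = 1 := by
        rw [hgtj]
        unfold stepVal
        rw [if_pos hB]
      refine ⟨fun _ hB' => absurd hB hB', fun _ => hcval, fun hA => absurd hA (fun hA => hAB j hA hB), ?_⟩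
      rw [himgFj, hcval]
      have h1W : (1:ℚ) ∉ W := fun hcon => absurd (hW01 1 hcon).2 (lt_irrefl 1)
      have : (insert (1:ℚ) W).filter (fun y => y ≤ 1) = insert 1 W := by
        apply Finset.filter_true_of_mem
        intro x hx
        rcases Finset.mem_insert.mp hx with rfl | hx
        · exact le_refl 1
        · exact le_of_lt (hW01 x hx).2
      rw [this, Finset.card_insert_of_notMem h1W, hWcard, hBf j hB]
    by_cases hA : j ∈ A
    · -- case A : reuse the f-th smallest
      have hfA : f (t j) < (F j).card := hAf j hA
      have hflt : f (t j) - 1 < W.card := by omega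
      have hcval : g (t j) = nthVal W (f (t j) - 1) := by
        rw [hgtj]
        unfold stepVal
        rw [if_neg hB, if_pos hA]
      have hcW : g (t j) ∈ W := hcval ▸ nthVal_mem hflt
      refine ⟨fun hA' => absurd hA hA', fun hB' => absurd hB' hB, ?_, ?_⟩
      · intro _
        have : g (t j) ∈ V.image g := hWg ▸ hcW
        rw [Finset.mem_image] at this
        obtain ⟨y, hy, hgy⟩ := this
        refine ⟨tInv y, by rw [hjk]; exact hVidx y hy, (hVfresh y hy).1, (hVfresh y hy).2, ?_⟩
        rw [hty y, hgy]
      · rw [himgFj, Finset.insert_eq_self.mpr hcW, hcval, card_filter_le_nthVal hflt]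
        omega
    · -- fresh case
      set lo : ℚ := if 2 ≤ f (t j) then nthVal W (f (t j) - 2) else 0 with hlo
      set P : Finset ℚ := insert 1 (Finset.univ.image prev) with hP
      set s : Finset ℚ := P.filter (fun x => lo < x) with hs
      have hlo01 : 0 ≤ lo ∧ lo < 1 := by
        rw [hlo]
        split
        · rename_i h2f
          have hmemW : nthVal W (f (t j) - 2) ∈ W := nthVal_mem (by omega)
          have := hW01 _ hmemW
          exact ⟨le_of_lt this.1, this.2⟩
        · exact ⟨le_refl 0, by norm_num⟩
      have hs1 : (1:ℚ) ∈ s := by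
        rw [hs, Finset.mem_filter]
        exact ⟨Finset.mem_insert_self 1 _, hlo01.2⟩
      have hne : s.Nonempty := ⟨1, hs1⟩
      set q : ℚ := s.min.untopD 1 with hq
      have hqmin : q = s.min' hne := by
        rw [hq, ← Finset.coe_min' hne]
        rfl
      have hqs : q ∈ s := hqmin ▸ s.min'_mem hne
      have hloq : lo < q := (Finset.mem_filter.mp hqs).2
      have hq1 : q ≤ 1 := hqmin ▸ Finset.min'_le s 1 hs1
      have hqle : ∀ p ∈ P, lo < p → q ≤ p := by
        intro p hp hlp
        rw [hqmin]
        exact Finset.min'_le s p (Finset.mem_filter.mpr ⟨hp, hlp⟩)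
      have hcval : g (t j) = (lo + q) / 2 := by
        rw [hgtj]
        unfold stepVal
        rw [if_neg hB, if_neg hA]
      have hcl : lo < g (t j) := by rw [hcval]; linarith
      have hcq : g (t j) < q := by rw [hcval]; linarith
      have hWP : ∀ w ∈ W, w ∈ P := by
        intro w hw
        rw [hWdef, Finset.mem_image] at hw
        obtain ⟨y, _, rfl⟩ := hw
        rw [hP]
        exact Finset.mem_insert_of_mem (Finset.mem_image_of_mem prev (Finset.mem_univ _))
      have hWc : ∀ w ∈ W, (w ≤ g (t j) ↔ w ≤ lo) := by
        intro w hw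
        constructor
        · intro hwc
          by_contra hcon
          push_neg at hcon
          have := hqle w (hWP w hw) hcon
          linarith
        · intro hwlo; linarith
      have hcW : g (t j) ∉ W := by
        intro hcon
        have := (hWc _ hcon).mp (le_refl _)
        linarith
      have hcardlo : (W.filter (fun y => y ≤ lo)).card = f (t j) - 1 := by
        rw [hlo]
        split
        · rename_i h2f
          have h2 : f (t j) - 2 < W.card := by omega
          rw [card_filter_le_nthVal h2]
          omega
        · rename_i h2f
          have hfj : f (t j) = 1 := by omega
          have hemp : W.filter (fun y => y ≤ (0:ℚ)) = ∅ := by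
            apply Finset.filter_false_of_mem
            intro w hw hcon
            have := (hW01 w hw).1
            linarith
          rw [hemp, hfj, Finset.card_empty]
      refine ⟨?_, fun hB' => absurd hB' hB, fun hA' => absurd hA' hA, ?_⟩
      · intro _ _
        refine ⟨⟨by linarith [hlo01.1], by linarith⟩, ?_⟩
        intro j' hj'
        have hj'k : j'.val < k := by omega
        have hP' : g (t j') ∈ P := by
          rw [hgprev j' hj'k, hP]
          exact Finset.mem_insert_of_mem (Finset.mem_image_of_mem prev (Finset.mem_univ _))
        intro hcon
        rcases Nat.lt_or_ge 0 1 with _ | _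
        · by_cases hplo : g (t j') ≤ lo
          · rw [hcon] at hcl; linarith
          · push_neg at hplo
            have := hqle _ hP' hplo
            rw [hcon] at hcq; linarith
        · omega
      · rw [himgFj]
        have hfil : (insert (g (t j)) W).filter (fun y => y ≤ g (t j)) =
            insert (g (t j)) (W.filter (fun y => y ≤ g (t j))) := by
          rw [Finset.filter_insert, if_pos (le_refl _)]
        rw [hfil]
        have : W.filter (fun y => y ≤ g (t j)) = W.filter (fun y => y ≤ lo) := by
          apply Finset.filter_congr
          intro w hw
          exact hWc w hw
        rw [Finset.card_insert_of_notMem (fun hcon => hcW (Finset.mem_of_mem_filter _ hcon)),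
          this, hcardlo]
        omega

lemma rank_transfer {u I : Finset ℚ} (hu : u ⊆ I) {a : ℚ} (ha : a ∈ u)
    {β : Type*} [LinearOrder β] [DecidableEq β] {φ : ℚ → β} (hφ : StrictMonoOn φ ↑I) :
    ((u.image φ).filter (fun y => y ≤ φ a)).card = (u.filter (fun y => y ≤ a)).card := by
  have himg : (u.image φ).filter (fun y => y ≤ φ a) = (u.filter (fun y => y ≤ a)).image φ := by
    ext b
    simp only [Finset.mem_filter, Finset.mem_image]
    constructor
    · rintro ⟨⟨x, hx, rfl⟩, hle⟩
      exact ⟨x, ⟨hx, (hφ.le_iff_le (hu hx) (hu ha)).mp hle⟩, rfl⟩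
    · rintro ⟨x, ⟨hx, hxa⟩, rfl⟩
      exact ⟨⟨x, hx, rfl⟩, (hφ.le_iff_le (hu hx) (hu ha)).mpr hxa⟩
  rw [himg, Finset.card_image_of_injOn]
  exact Set.InjOn.mono (fun x hx => hu ((Finset.filter_subset _ _) hx)) hφ.injOn

theorem shelled_case {n m : ℕ} (F : Fin n → Finset (Fin n)) (hsh : IsShelling F)
    (t : Fin n → Fin n) (ht_inj : Function.Injective t) (ht_mem : ∀ i, t i ∈ F i)
    (S : Finset (Fin n))
    (hS : S = Finset.univ.filter fun k => (Finset.univ.filter fun i => k ∈ F i).card = 1)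
    (hm1 : n - S.card + 1 ≤ m) (hm2 : m ≤ n)
    (f : Fin n → ℕ) (hf : ∀ i, 1 ≤ f (t i) ∧ f (t i) ≤ (F i).card) :
    ∃ σ : Fin n → Fin m, Function.Surjective σ ∧ Satisfies F t σ f := by
  classical
  rcases Nat.eq_zero_or_pos n with rfl | hn
  · exfalso
    have : S.card = 0 := Nat.le_zero.mp (le_trans (Finset.card_le_card (Finset.subset_univ S))
      (by simp))
    omega
  have hScard_le : S.card ≤ n := le_trans (Finset.card_le_card (Finset.subset_univ S))
    (by simp)
  -- t is a bijection
  have ht_bij : Function.Bijective t := Finite.injective_iff_bijective.mp ht_inj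
  set e := Equiv.ofBijective t ht_bij with he
  set tInv : Fin n → Fin n := fun y => e.symm y with htInv
  have htt : ∀ j, tInv (t j) = j := fun j => e.symm_apply_apply j
  have hty : ∀ y, t (tInv y) = y := fun y => e.apply_symm_apply y
  -- shelling: F k is contained in the first transversal elements
  have hFsub : ∀ k : Fin n, F k ⊆ (Finset.univ.filter (fun i => i ≤ k)).image t := by
    intro k
    set T := (Finset.univ.filter (fun i => i ≤ k)).image t with hT
    set U := (Finset.univ.filter (fun i => i ≤ k)).biUnion F with hU
    have hTU : T ⊆ U := by
      intro y hy
      rw [hT, Finset.mem_image] at hy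
      obtain ⟨i, hi, rfl⟩ := hy
      exact Finset.mem_biUnion.mpr ⟨i, hi, ht_mem i⟩
    have hfiltcard : (Finset.univ.filter (fun i => i ≤ k)).card = (k : ℕ) + 1 := by
      have : Finset.univ.filter (fun i => i ≤ k) = Finset.Iic k := by
        ext i; simp [Finset.mem_Iic]
      rw [this, Fin.card_Iic]
    have hTcard : T.card = (k : ℕ) + 1 := by
      rw [hT, Finset.card_image_of_injective _ ht_inj, hfiltcard]
    have hUcard : U.card = (k : ℕ) + 1 := hsh k
    have hTeqU : T = U := Finset.eq_of_subset_of_card_le hTU (by omega)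
    have hFU : F k ⊆ U :=
      Finset.subset_biUnion_of_mem F (Finset.mem_filter.mpr ⟨Finset.mem_univ k, le_refl k⟩)
    rw [← hTeqU] at hFU
    exact hFU
  have hidx : ∀ k : Fin n, ∀ y ∈ F k, tInv y ≤ k := by
    intro k y hy
    have := hFsub k hy
    rw [Finset.mem_image] at this
    obtain ⟨i, hi, rfl⟩ := this
    rw [htt i]
    exact (Finset.mem_filter.mp hi).2
  -- index version of S
  set SI := Finset.univ.filter (fun k => t k ∈ S) with hSI
  have hSIonly : ∀ k ∈ SI, ∀ j, t k ∈ F j → j = k := by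
    intro k hk j hj
    rw [hSI, Finset.mem_filter, hS, Finset.mem_filter] at hk
    obtain ⟨a, ha⟩ := Finset.card_eq_one.mp hk.2.2
    have hja : j ∈ Finset.univ.filter (fun i => t k ∈ F i) := by
      rw [Finset.mem_filter]; exact ⟨Finset.mem_univ j, hj⟩
    have hka : k ∈ Finset.univ.filter (fun i => t k ∈ F i) := by
      rw [Finset.mem_filter]; exact ⟨Finset.mem_univ k, ht_mem k⟩
    rw [ha, Finset.mem_singleton] at hja hka
    rw [hja, hka]
  have hSIcard : SI.card = S.card := by
    have himg : SI.image t = S := by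
      ext y
      constructor
      · intro hy
        rw [Finset.mem_image] at hy
        obtain ⟨k, hk, rfl⟩ := hy
        exact (Finset.mem_filter.mp hk).2
      · intro hy
        rw [Finset.mem_image]
        exact ⟨tInv y, Finset.mem_filter.mpr ⟨Finset.mem_univ _, by rw [hty y]; exact hy⟩, hty y⟩
    rw [← himg, Finset.card_image_of_injective _ ht_inj]
  set Non := SI.filter (fun k => f (t k) < (F k).card) with hNon
  set Top := SI.filter (fun k => ¬ f (t k) < (F k).card) with hTop
  have hNT : Non.card + Top.card = S.card := by
    rw [hNon, hTop, Finset.card_filter_add_card_filter_not, hSIcard]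
  set d := n - m with hd
  have hd1 : d + 1 ≤ S.card := by omega
  -- choose the merge plan
  obtain ⟨A, B, hA_sub, hB_sub, hABcard⟩ :
      ∃ A B : Finset (Fin n), A ⊆ Non ∧ B ⊆ Top ∧
        n - (A.card + B.card) + (if B.Nonempty then 1 else 0) = m := by
    by_cases hdN : d ≤ Non.card
    · obtain ⟨A, hA, hAcard⟩ := Finset.exists_subset_card_eq hdN
      refine ⟨A, ∅, hA, Finset.empty_subset _, ?_⟩
      simp [hAcard]
      omega
    · push_neg at hdN
      have : d - Non.card + 1 ≤ Top.card := by omega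
      obtain ⟨B, hB, hBcard⟩ := Finset.exists_subset_card_eq this
      refine ⟨Non, B, Finset.Subset.refl _, hB, ?_⟩
      have hBne : B.Nonempty := by
        rw [← Finset.card_pos, hBcard]; omega
      rw [if_pos hBne, hBcard]
      omega
  have hAonly : ∀ k ∈ A, ∀ j, t k ∈ F j → j = k :=
    fun k hk => hSIonly k (Finset.mem_of_mem_filter _ (hA_sub hk))
  have hBonly : ∀ k ∈ B, ∀ j, t k ∈ F j → j = k :=
    fun k hk => hSIonly k (Finset.mem_of_mem_filter _ (hB_sub hk))
  have hAf : ∀ k ∈ A, f (t k) < (F k).card :=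
    fun k hk => (Finset.mem_filter.mp (hA_sub hk)).2
  have hBf : ∀ k ∈ B, f (t k) = (F k).card := by
    intro k hk
    have h1 := (Finset.mem_filter.mp (hB_sub hk)).2
    have h2 := (hf k).2
    omega
  have hAB : ∀ k, k ∈ A → k ∈ B → False := by
    intro k hkA hkB
    exact (Finset.mem_filter.mp (hB_sub hkB)).2 ((Finset.mem_filter.mp (hA_sub hkA)).2)
  -- invoke the invariant
  have hf1 : ∀ k, 1 ≤ f (t k) := fun k => (hf k).1
  have hf2 : ∀ k, f (t k) ≤ (F k).card := fun k => (hf k).2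
  have hinv := main_invariant (F := F) (t := t) (tInv := tInv) (f := f) (A := A) (B := B)
    htt hty ht_mem hidx hf1 hf2 hAonly hBonly hAf hBf hAB n
  set g := gFin F t tInv f A B with hg
  have hInv := fun (j : Fin n) => hinv j j.isLt
  -- compute the image of g
  set Fresh := Finset.univ \ (A ∪ B) with hFresh
  have hFresh_mem : ∀ j : Fin n, j ∈ Fresh ↔ (j ∉ A ∧ j ∉ B) := by
    intro j
    rw [hFresh, Finset.mem_sdiff, Finset.mem_union]
    constructor
    · intro h; exact ⟨fun hc => h.2 (Or.inl hc), fun hc => h.2 (Or.inr hc)⟩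
    · intro h; exact ⟨Finset.mem_univ j, fun hc => hc.elim h.1 h.2⟩
  have hFresh_card : Fresh.card = n - (A.card + B.card) := by
    rw [hFresh, Finset.card_sdiff_of_subset (Finset.subset_univ _), Finset.card_union_of_disjoint
      (Finset.disjoint_left.mpr (fun a haA haB => hAB a haA haB))]
    simp
  set I := Finset.univ.image g with hI
  have hIelem : ∀ x ∈ I, ∃ y, g y = x := by
    intro x hx
    rw [hI, Finset.mem_image] at hx
    obtain ⟨y, _, hy⟩ := hx
    exact ⟨y, hy⟩
  have hIt : I = Finset.univ.image (fun j => g (t j)) := by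
    rw [hI]
    ext x
    simp only [Finset.mem_image, Finset.mem_univ, true_and]
    constructor
    · rintro ⟨y, rfl⟩; exact ⟨tInv y, by rw [hty y]⟩
    · rintro ⟨j, rfl⟩; exact ⟨t j, rfl⟩
  have hIdecomp : I = Fresh.image (fun j => g (t j)) ∪ (if B.Nonempty then {(1:ℚ)} else ∅) := by
    rw [hIt]
    apply Finset.Subset.antisymm
    · intro x hx
      rw [Finset.mem_image] at hx
      obtain ⟨j, _, rfl⟩ := hx
      by_cases hjB : j ∈ B
      · have : g (t j) = 1 := (hInv j).2.1 hjB
        rw [this]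
        apply Finset.mem_union_right
        rw [if_pos ⟨j, hjB⟩]
        exact Finset.mem_singleton_self 1
      by_cases hjA : j ∈ A
      · obtain ⟨j', _, hj'A, hj'B, heq⟩ := (hInv j).2.2.1 hjA
        rw [heq]
        exact Finset.mem_union_left _ (Finset.mem_image_of_mem _
          ((hFresh_mem j').mpr ⟨hj'A, hj'B⟩))
      · exact Finset.mem_union_left _ (Finset.mem_image_of_mem _
          ((hFresh_mem j).mpr ⟨hjA, hjB⟩))
    · intro x hx
      rcases Finset.mem_union.mp hx with hx | hx
      · rw [Finset.mem_image] at hx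
        obtain ⟨j, _, rfl⟩ := hx
        exact Finset.mem_image_of_mem _ (Finset.mem_univ j)
      · split at hx
        · rename_i hBne
          obtain ⟨j, hjB⟩ := hBne
          rw [Finset.mem_singleton] at hx
          subst hx
          rw [← (hInv j).2.1 hjB]
          exact Finset.mem_image_of_mem _ (Finset.mem_univ j)
        · exact absurd hx (Finset.notMem_empty x)
  have hFreshInj : Set.InjOn (fun j => g (t j)) ↑Fresh := by
    intro j hj j' hj' heq
    simp only [Finset.coe_sdiff, Set.mem_diff, Finset.mem_coe] at hj hj'
    have hjF := (hFresh_mem j).mp (by exact_mod_cast hj)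
    have hj'F := (hFresh_mem j').mp (by exact_mod_cast hj')
    by_contra hne
    rcases Nat.lt_or_ge j.val j'.val with hlt | hge
    · exact ((hInv j').1 hj'F.1 hj'F.2).2 j hlt heq.symm
    · have hlt : j'.val < j.val := by
        rcases Nat.lt_or_ge j'.val j.val with h' | h'
        · exact h'
        · exact absurd (Fin.ext (le_antisymm h' hge)) hne
      exact ((hInv j).1 hjF.1 hjF.2).2 j' hlt heq
  have hIm : I.card = m := by
    rw [hIdecomp]
    have hcard1 : (Fresh.image (fun j => g (t j))).card = Fresh.card :=
      Finset.card_image_of_injOn hFreshInj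
    by_cases hBne : B.Nonempty
    · rw [if_pos hBne]
      have hdisj : Disjoint (Fresh.image (fun j => g (t j))) {(1:ℚ)} := by
        rw [Finset.disjoint_singleton_right]
        intro hcon
        rw [Finset.mem_image] at hcon
        obtain ⟨j, hj, heq⟩ := hcon
        have hjF := (hFresh_mem j).mp hj
        have := ((hInv j).1 hjF.1 hjF.2).1.2
        rw [heq] at this
        exact lt_irrefl 1 this
      rw [Finset.card_union_of_disjoint hdisj, hcard1, Finset.card_singleton, hFresh_card]
      rw [if_pos hBne] at hABcard
      omega
    · rw [if_neg hBne, Finset.union_empty, hcard1, hFresh_card]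
      rw [if_neg hBne] at hABcard
      omega
  -- build σ
  have hgI : ∀ y, g y ∈ I := fun y => Finset.mem_image_of_mem g (Finset.mem_univ y)
  set ψ := (I.orderIsoOfFin hIm).symm with hψ
  have hm0 : 0 < m := by omega
  set φ : ℚ → Fin m := fun q => if h : q ∈ I then ψ ⟨q, h⟩ else ⟨0, hm0⟩ with hφ
  set σ : Fin n → Fin m := fun y => φ (g y) with hσ
  have hσy : ∀ y, σ y = ψ ⟨g y, hgI y⟩ := by
    intro y
    rw [hσ, hφ]
    simp only [dif_pos (hgI y)]
  have hφmono : StrictMonoOn φ ↑I := by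
    intro a ha b hb hab
    rw [Finset.mem_coe] at ha hb
    rw [hφ]
    simp only [dif_pos ha, dif_pos hb]
    have : (⟨a, ha⟩ : {x // x ∈ I}) < ⟨b, hb⟩ := hab
    exact ψ.strictMono this
  refine ⟨σ, ?_, ?_⟩
  · intro i
    obtain ⟨y, hy⟩ := hIelem _ (I.orderIsoOfFin hIm i).2
    refine ⟨y, ?_⟩
    rw [hσy y]
    have hxy : (⟨g y, hgI y⟩ : {x // x ∈ I}) = (I.orderIsoOfFin hIm) i := Subtype.ext hy
    rw [hxy, hψ]
    exact (I.orderIsoOfFin hIm).symm_apply_apply i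
  · intro i
    have hsub : (F i).image g ⊆ I := by
      intro x hx
      rw [Finset.mem_image] at hx
      obtain ⟨y, _, rfl⟩ := hx
      exact hgI y
    have hmemu : g (t i) ∈ (F i).image g := Finset.mem_image_of_mem g (ht_mem i)
    have himg2 : (F i).image σ = ((F i).image g).image φ := by
      rw [Finset.image_image]
      rfl
    rw [himg2]
    exact (rank_transfer hsub hmemu hφmono).trans ((hInv i).2.2.2)

end Stmt8

theorem stmt_8 {n m : ℕ} (F : Fin n → Finset (Fin n)) (hF : Shellable F)
    (t : Fin n → Fin n) (ht_inj : Function.Injective t) (ht_mem : ∀ i, t i ∈ F i)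
    (S : Finset (Fin n))
    (hS : S = Finset.univ.filter fun k => (Finset.univ.filter fun i => k ∈ F i).card = 1)
    (hm1 : n - S.card + 1 ≤ m) (hm2 : m ≤ n)
    (f : Fin n → ℕ) (hf : ∀ i, 1 ≤ f (t i) ∧ f (t i) ≤ (F i).card) :
    ∃ σ : Fin n → Fin m, Function.Surjective σ ∧ Satisfies F t σ f := by
  classical
  obtain ⟨π, hπ⟩ := hF
  have hS' : S = Finset.univ.filter fun k =>
      (Finset.univ.filter fun i => k ∈ (F ∘ π) i).card = 1 := by
    rw [hS]
    apply Finset.filter_congr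
    intro k _
    have : (Finset.univ.filter fun i => k ∈ (F ∘ π) i).card
        = (Finset.univ.filter fun i => k ∈ F i).card := by
      apply Finset.card_bij (fun i _ => π i)
      · intro a ha
        rw [Finset.mem_filter] at ha ⊢
        exact ⟨Finset.mem_univ _, ha.2⟩
      · intro a _ b _ hab
        exact π.injective hab
      · intro b hb
        rw [Finset.mem_filter] at hb
        refine ⟨π.symm b, ?_, by simp⟩
        rw [Finset.mem_filter]
        refine ⟨Finset.mem_univ _, ?_⟩
        show k ∈ F (π (π.symm b))
        rw [Equiv.apply_symm_apply]
        exact hb.2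
    rw [this]
  obtain ⟨σ, hσ_surj, hσ_sat⟩ := Stmt8.shelled_case (F ∘ π) hπ (t ∘ π)
    (ht_inj.comp π.injective) (fun i => ht_mem (π i)) S hS' hm1 hm2 f (fun i => hf (π i))
  refine ⟨σ, hσ_surj, ?_⟩
  intro i
  have := hσ_sat (π.symm i)
  simpa using this
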